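/- Assume E‖X‖² < ∞ and that there is no nonzero v ∈ ℝ^p with E|v'X| = 0. Then the matrix H(θ, λ) = ∫ [e^{(θ−λ)'x}/(1+e^{(θ−λ)'x})²] · [(e^{λ'x} + e^{f(x)})/((1+e^{λ'x})(1+e^{f(x)}))] x x' dP(x) is finite, symmetric positive definite for every (θ, λ) ∈ ℝ^p × ℝ^p, and jointly continuous in (θ, λ); likewise the score covariance J(θ, λ) = Var_{P_λ}[(Y − σ((θ−λ)'X)) X] is finite and jointly continuous in (θ, λ). -/

import Mathlib

open MeasureTheory ProbabilityTheory Real Filter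
open scoped ENNReal NNReal RealInnerProductSpace Topology BoundedContinuousFunction

noncomputable section

/-- Shorthand for `ℝ^d` with the Euclidean inner product. -/
abbrev Evec (d : ℕ) := EuclideanSpace ℝ (Fin d)

/-- The logistic sigmoid `σ(t) = eᵗ / (1 + eᵗ)`. -/
def sigm (t : ℝ) : ℝ := Real.exp t / (1 + Real.exp t)

/-- The soft hinge function `h(η; π) = -π η + log (1 + e^η)`. -/
def softHinge (η pr : ℝ) : ℝ := -pr * η + Real.log (1 + Real.exp η)

variable {d : ℕ}

/-- The joint law of `(X, Y)` on `ℝ^d × ℝ` determined by the marginal law `ν` of `X`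
and the conditional probability `pf x = P(Y = 1 | X = x)`; `Y ∈ {0, 1}`. -/
def jointLaw (ν : Measure (Evec d)) (pf : Evec d → ℝ) : Measure (Evec d × ℝ) :=
  ν.bind fun x => ENNReal.ofReal (pf x) • Measure.dirac (x, (1 : ℝ)) +
    ENNReal.ofReal (1 - pf x) • Measure.dirac (x, (0 : ℝ))

/-- The logistic loss `ρ(θ; x, y) = -y θ'x + log (1 + exp (θ'x))` (intercept absorbed). -/
def logisticLoss (θ : Evec d) (xy : Evec d × ℝ) : ℝ :=
  -xy.2 * ⟪θ, xy.1⟫ + Real.log (1 + Real.exp ⟪θ, xy.1⟫)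

/-- The conditional log-odds `f(x) = logit p(x)`. -/
def flogit (pf : Evec d → ℝ) (x : Evec d) : ℝ := Real.log (pf x / (1 - pf x))

/-- Local case-control acceptance probability `a_λ(x, y) = |y - σ(λ'x)|`. -/
def accProb (lam : Evec d) (xy : Evec d × ℝ) : ℝ := |xy.2 - sigm ⟪lam, xy.1⟫|

/-- Marginal acceptance probability `ā(λ) = E[a_λ(X, Y)]`. -/
def aBar (μ : Measure (Evec d × ℝ)) (lam : Evec d) : ℝ := ∫ xy, accProb lam xy ∂μ

/-- Conditional acceptance probability `â_λ(x) = σ(λ'x)(1 - p(x)) + (1 - σ(λ'x)) p(x)`. -/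
def aHat (pf : Evec d → ℝ) (lam x : Evec d) : ℝ :=
  sigm ⟪lam, x⟫ * (1 - pf x) + (1 - sigm ⟪lam, x⟫) * pf x

/-- The tilted (biased subsampling) measure `dP_λ = a_λ dP / ā(λ)`. -/
def tiltedLaw (μ : Measure (Evec d × ℝ)) (lam : Evec d) : Measure (Evec d × ℝ) :=
  μ.withDensity fun xy => ENNReal.ofReal (accProb lam xy / aBar μ lam)

/-- Population risk under the tilted measure: `R_λ(θ) = E_{P_λ}[ρ(θ; X, Y)]`. -/
def Rpop (μ : Measure (Evec d × ℝ)) (lam θ : Evec d) : ℝ :=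
  ∫ xy, logisticLoss θ xy ∂(tiltedLaw μ lam)

/-- Recentred population risk `Q_λ(θ) = R_λ(θ - λ)`. -/
def Qpop (μ : Measure (Evec d × ℝ)) (lam θ : Evec d) : ℝ := Rpop μ lam (θ - lam)

/-- Nonseparability: no nonzero direction `v` separates the two classes. -/
def NonSep (μ : Measure (Evec d × ℝ)) : Prop :=
  ¬ ∃ v : Evec d, v ≠ 0 ∧ μ {xy | xy.2 = 0 ∧ 0 < ⟪v, xy.1⟫} = 0 ∧
    μ {xy | xy.2 = 1 ∧ ⟪v, xy.1⟫ < 0} = 0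

/-- Nondegeneracy: there is no nonzero `v` with `E|v'X| = 0`. -/
def NonDegen (μ : Measure (Evec d × ℝ)) : Prop :=
  ∀ v : Evec d, v ≠ 0 → ∫ xy, |⟪v, xy.1⟫| ∂μ ≠ 0

/-- The Hessian-type matrix `H(θ, λ)` (entrywise integrals). -/
def Hmat (ν : Measure (Evec d)) (pf : Evec d → ℝ) (θ lam : Evec d) :
    Matrix (Fin d) (Fin d) ℝ :=
  Matrix.of fun i j => ∫ x,
    Real.exp ⟪θ - lam, x⟫ / (1 + Real.exp ⟪θ - lam, x⟫) ^ 2 *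
      ((Real.exp ⟪lam, x⟫ + Real.exp (flogit pf x)) /
        ((1 + Real.exp ⟪lam, x⟫) * (1 + Real.exp (flogit pf x)))) * (x i * x j) ∂ν

/-- The logistic score vector `(y - σ((θ-λ)'x)) x`. -/
def scoreVec (θ lam : Evec d) (xy : Evec d × ℝ) : Evec d :=
  (xy.2 - sigm ⟪θ - lam, xy.1⟫) • xy.1

/-- The score covariance matrix `J(θ, λ) = Var_{P_λ}[(Y - σ((θ-λ)'X)) X]` (entrywise). -/
def Jmat (μ : Measure (Evec d × ℝ)) (θ lam : Evec d) : Matrix (Fin d) (Fin d) ℝ :=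
  Matrix.of fun i j => ∫ xy,
    (scoreVec θ lam xy i - (∫ xy', scoreVec θ lam xy' ∂(tiltedLaw μ lam)) i) *
      (scoreVec θ lam xy j - (∫ xy', scoreVec θ lam xy' ∂(tiltedLaw μ lam)) j)
    ∂(tiltedLaw μ lam)

/-- The population score `G(θ, λ) = ∫ (σ(f(x) - λ'x) - σ((θ-λ)'x)) â_λ(x) x dP(x)`. -/
def Gfun (ν : Measure (Evec d)) (pf : Evec d → ℝ) (θ lam : Evec d) : Evec d :=
  ∫ x, ((sigm (flogit pf x - ⟪lam, x⟫) - sigm ⟪θ - lam, x⟫) * aHat pf lam x) • x ∂ν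

/-- The full-sample Fisher information `∫ σ(θ₀'x)(1 - σ(θ₀'x)) x x' dP(x)`,
whose inverse is the asymptotic covariance `Σ_full` of the full-sample MLE. -/
def Mfull (ν : Measure (Evec d)) (θ0 : Evec d) : Matrix (Fin d) (Fin d) ℝ :=
  Matrix.of fun i j => ∫ x, sigm ⟪θ0, x⟫ * (1 - sigm ⟪θ0, x⟫) * (x i * x j) ∂ν

/-- Loewner (positive-semidefinite) order on symmetric matrices. -/
def loewnerLE (A B : Matrix (Fin d) (Fin d) ℝ) : Prop := (B - A).PosSemidef



section Helpers
set_option linter.unusedSectionVars false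

lemma sigm_pos (t : ℝ) : 0 < sigm t := div_pos (exp_pos t) (by positivity)
lemma sigm_lt_one (t : ℝ) : sigm t < 1 := by
  rw [sigm, div_lt_one (by positivity)]; linarith [exp_pos t]
lemma continuous_sigm : Continuous sigm :=
  Real.continuous_exp.div (continuous_const.add Real.continuous_exp) fun t => by positivity

/-- the scalar weight in the H matrix -/
def hKer (pf : Evec d → ℝ) (θ lam x : Evec d) : ℝ :=
  Real.exp ⟪θ - lam, x⟫ / (1 + Real.exp ⟪θ - lam, x⟫) ^ 2 *
    ((Real.exp ⟪lam, x⟫ + Real.exp (flogit pf x)) /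
      ((1 + Real.exp ⟪lam, x⟫) * (1 + Real.exp (flogit pf x))))

lemma hKer_pos (pf : Evec d → ℝ) (θ lam x : Evec d) : 0 < hKer pf θ lam x := by
  have := exp_pos ⟪θ - lam, x⟫; have := exp_pos ⟪lam, x⟫; have := exp_pos (flogit pf x)
  apply mul_pos (by positivity) (by positivity)

lemma hKer_le (pf : Evec d → ℝ) (θ lam x : Evec d) : hKer pf θ lam x ≤ 1/4 := by
  have h1 := exp_pos ⟪θ - lam, x⟫
  have h2 := exp_pos ⟪lam, x⟫
  have h3 := exp_pos (flogit pf x)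
  have e1 : Real.exp ⟪θ - lam, x⟫ / (1 + Real.exp ⟪θ - lam, x⟫) ^ 2 ≤ 1/4 := by
    rw [div_le_iff₀ (by positivity)]; nlinarith [sq_nonneg (1 - Real.exp ⟪θ - lam, x⟫)]
  have e2 : (Real.exp ⟪lam, x⟫ + Real.exp (flogit pf x)) /
      ((1 + Real.exp ⟪lam, x⟫) * (1 + Real.exp (flogit pf x))) ≤ 1 := by
    rw [div_le_one (by positivity)]; nlinarith
  calc hKer pf θ lam x ≤ (1/4) * 1 := by
        apply mul_le_mul e1 e2 (by positivity) (by norm_num)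
    _ = 1/4 := by ring

lemma coord_abs_le (x : Evec d) (i : Fin d) : |x i| ≤ ‖x‖ := by
  rw [EuclideanSpace.norm_eq]
  have : |x i| = √(‖x i‖^2) := by
    rw [Real.norm_eq_abs, Real.sqrt_sq_eq_abs, abs_abs]
  rw [this]
  exact Real.sqrt_le_sqrt (Finset.single_le_sum (fun j _ => sq_nonneg ‖x j‖) (Finset.mem_univ i))

lemma hKer_meas (pf : Evec d → ℝ) (hpf : Measurable pf) (θ lam : Evec d) :
    Measurable fun x : Evec d => hKer pf θ lam x := by
  have hi1 : Continuous fun x : Evec d => ⟪θ - lam, x⟫ := Continuous.inner continuous_const continuous_id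
  have hi2 : Continuous fun x : Evec d => ⟪lam, x⟫ := Continuous.inner continuous_const continuous_id
  have hfl : Measurable fun x => flogit pf x :=
    (Real.measurable_log.comp (hpf.div (measurable_const.sub hpf)))
  exact (((Real.continuous_exp.comp hi1).measurable).div
    ((continuous_const.add (Real.continuous_exp.comp hi1)).pow 2).measurable).mul
    ((((Real.continuous_exp.comp hi2).measurable).add (Real.measurable_exp.comp hfl)).div
      (((continuous_const.add (Real.continuous_exp.comp hi2)).measurable).mul
        (measurable_const.add (Real.measurable_exp.comp hfl))))

lemma hKer_integrable (ν : Measure (Evec d)) [IsProbabilityMeasure ν]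
    (pf : Evec d → ℝ) (hpf : Measurable pf)
    (hX2 : Integrable (fun x : Evec d => ‖x‖ ^ 2) ν) (θ lam : Evec d) (i j : Fin d) :
    Integrable (fun x : Evec d => hKer pf θ lam x * (x i * x j)) ν := by
  apply Integrable.mono' (hX2.const_mul (1/4))
  · exact ((hKer_meas pf hpf θ lam).mul
      (((continuous_apply i).comp (PiLp.continuous_ofLp 2 _)).measurable.mul
        ((continuous_apply j).comp (PiLp.continuous_ofLp 2 _)).measurable)).aestronglyMeasurable
  · filter_upwards with x
    rw [Real.norm_eq_abs, abs_mul]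
    have h1 : |hKer pf θ lam x| ≤ 1/4 := by
      rw [abs_of_pos (hKer_pos pf θ lam x)]; exact hKer_le pf θ lam x
    have h2 : |x i * x j| ≤ ‖x‖^2 := by
      rw [abs_mul, sq]
      exact mul_le_mul (coord_abs_le x i) (coord_abs_le x j) (abs_nonneg _) (norm_nonneg _)
    calc |hKer pf θ lam x| * |x i * x j| ≤ (1/4) * ‖x‖^2 :=
          mul_le_mul h1 h2 (abs_nonneg _) (by norm_num)
      _ = 1/4 * ‖x‖^2 := rfl


lemma inner_sum_eq (v : Fin d → ℝ) (x : Evec d) :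
    ⟪((WithLp.equiv 2 (Fin d → ℝ)).symm v : Evec d), x⟫ = ∑ i, v i * x i := by
  simp [PiLp.inner_apply, RCLike.inner_apply, mul_comm]

lemma hKerQ_integrable (ν : Measure (Evec d)) [IsProbabilityMeasure ν]
    (pf : Evec d → ℝ) (hpf : Measurable pf)
    (hX2 : Integrable (fun x : Evec d => ‖x‖ ^ 2) ν) (θ lam : Evec d) (v : Evec d) :
    Integrable (fun x : Evec d => hKer pf θ lam x * ⟪v, x⟫ ^ 2) ν := by
  apply Integrable.mono' (hX2.const_mul (1/4 * ‖v‖^2))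
  · exact ((hKer_meas pf hpf θ lam).mul
      (((Continuous.inner continuous_const continuous_id).pow 2).measurable)).aestronglyMeasurable
  · filter_upwards with x
    rw [Real.norm_eq_abs, abs_mul, abs_of_pos (hKer_pos pf θ lam x)]
    have h2 : |⟪v, x⟫ ^ 2| ≤ ‖v‖^2 * ‖x‖^2 := by
      rw [abs_of_nonneg (sq_nonneg _)]
      nlinarith [abs_real_inner_le_norm v x, abs_nonneg (⟪v,x⟫ : ℝ),
        sq_abs (⟪v,x⟫ : ℝ), norm_nonneg v, norm_nonneg x]
    calc hKer pf θ lam x * |⟪v, x⟫ ^ 2| ≤ (1/4) * (‖v‖^2 * ‖x‖^2) :=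
          mul_le_mul (hKer_le pf θ lam x) h2 (abs_nonneg _) (by norm_num)
      _ = 1/4 * ‖v‖^2 * ‖x‖^2 := by ring

lemma Hmat_posDef (ν : Measure (Evec d)) [IsProbabilityMeasure ν]
    (pf : Evec d → ℝ) (hpf : Measurable pf)
    (hX2 : Integrable (fun x : Evec d => ‖x‖ ^ 2) ν)
    (hnd : ∀ v : Evec d, v ≠ 0 → ∫ x, |⟪v, x⟫| ∂ν ≠ 0) (θ lam : Evec d) :
    (Hmat ν pf θ lam).PosDef := by
  have hint := hKer_integrable ν pf hpf hX2 θ lam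
  refine Matrix.posDef_iff_dotProduct_mulVec.mpr ⟨?_, ?_⟩
  · ext i j
    simp only [Matrix.conjTranspose_apply, Hmat, Matrix.of_apply, star_trivial]
    congr 1; funext x; ring
  · intro v hv
    set vE : Evec d := (WithLp.equiv 2 (Fin d → ℝ)).symm v with hvE
    have hvE0 : vE ≠ 0 := fun h => hv ((WithLp.equiv 2 (Fin d → ℝ)).symm.injective (h.trans rfl))
    have key : dotProduct (star v) ((Hmat ν pf θ lam).mulVec v) =
        ∫ x, hKer pf θ lam x * ⟪vE, x⟫ ^ 2 ∂ν := by
      have hH : ∀ i j : Fin d, Hmat ν pf θ lam i j = ∫ x, hKer pf θ lam x * (x i * x j) ∂ν :=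
        fun i j => rfl
      have e1 : dotProduct (star v) ((Hmat ν pf θ lam).mulVec v) =
          ∑ i, ∑ j, (∫ x, hKer pf θ lam x * (x i * x j) ∂ν) * (v i * v j) := by
        simp only [dotProduct, Matrix.mulVec, Pi.star_apply, star_trivial,
          Finset.mul_sum, hH]
        refine Finset.sum_congr rfl fun i _ => Finset.sum_congr rfl fun j _ => by ring
      rw [e1]
      have e2 : ∀ i j : Fin d, (∫ x, hKer pf θ lam x * (x i * x j) ∂ν) * (v i * v j)
          = ∫ x, hKer pf θ lam x * (x i * x j) * (v i * v j) ∂ν := fun i j =>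
        (integral_mul_const _ _).symm
      simp_rw [e2]
      have e3 : ∀ i : Fin d, ∑ j, ∫ x, hKer pf θ lam x * (x i * x j) * (v i * v j) ∂ν
          = ∫ x, ∑ j, hKer pf θ lam x * (x i * x j) * (v i * v j) ∂ν := fun i =>
        (integral_finset_sum _ (fun j _ => (hint i j).mul_const _)).symm
      simp_rw [e3]
      rw [← integral_finset_sum _ (fun i _ =>
        integrable_finset_sum _ (fun j _ => (hint i j).mul_const _))]
      congr 1; funext x
      rw [inner_sum_eq, sq, Finset.sum_mul_sum, Finset.mul_sum]
      refine Finset.sum_congr rfl fun i _ => ?_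
      rw [Finset.mul_sum]
      exact Finset.sum_congr rfl fun j _ => by ring
    rw [key]
    have hnn : 0 ≤ᵐ[ν] fun x => hKer pf θ lam x * ⟪vE, x⟫ ^ 2 :=
      ae_of_all _ fun x => mul_nonneg (hKer_pos pf θ lam x).le (sq_nonneg _)
    have hInt := hKerQ_integrable ν pf hpf hX2 θ lam vE
    rw [integral_pos_iff_support_of_nonneg_ae hnn hInt]
    by_contra h
    push_neg at h
    have h0 : ν (Function.support fun x => hKer pf θ lam x * ⟪vE, x⟫ ^ 2) = 0 :=
      le_antisymm h zero_le
    have hae : ∀ᵐ x ∂ν, (⟪vE, x⟫ : ℝ) = 0 := by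
      have hnm : ∀ᵐ x ∂ν, x ∉ Function.support fun x => hKer pf θ lam x * ⟪vE, x⟫ ^ 2 :=
        measure_eq_zero_iff_ae_notMem.mp h0
      filter_upwards [hnm] with x hx
      by_contra hne
      exact hx (mul_ne_zero (ne_of_gt (hKer_pos pf θ lam x)) (pow_ne_zero _ hne))
    refine hnd vE hvE0 ?_
    rw [integral_congr_ae (g := fun _ => (0:ℝ)) (hae.mono fun x hx => by rw [hx, abs_zero]),
      integral_zero]


lemma hKer_mul_bound (pf : Evec d → ℝ) (θ lam x : Evec d) (i j : Fin d) :
    ‖hKer pf θ lam x * (x i * x j)‖ ≤ 1/4 * ‖x‖ ^ 2 := by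
  rw [Real.norm_eq_abs, abs_mul, abs_of_pos (hKer_pos pf θ lam x)]
  have h2 : |x i * x j| ≤ ‖x‖^2 := by
    rw [abs_mul, sq]
    exact mul_le_mul (coord_abs_le x i) (coord_abs_le x j) (abs_nonneg _) (norm_nonneg _)
  exact mul_le_mul (hKer_le pf θ lam x) h2 (abs_nonneg _) (by norm_num)

lemma Hmat_continuous (ν : Measure (Evec d)) [IsProbabilityMeasure ν]
    (pf : Evec d → ℝ) (hpf : Measurable pf)
    (hX2 : Integrable (fun x : Evec d => ‖x‖ ^ 2) ν) :
    Continuous fun tl : Evec d × Evec d => Hmat ν pf tl.1 tl.2 := by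
  apply continuous_matrix
  intro i j
  rw [continuous_iff_continuousAt]
  intro tl0
  have hrw : ∀ tl : Evec d × Evec d, Hmat ν pf tl.1 tl.2 i j
      = ∫ x, hKer pf tl.1 tl.2 x * (x i * x j) ∂ν := fun _ => rfl
  simp only [hrw]
  apply continuousAt_of_dominated (bound := fun x => 1/4 * ‖x‖^2)
  · exact .of_forall fun tl => (hKer_integrable ν pf hpf hX2 tl.1 tl.2 i j).aestronglyMeasurable
  · exact .of_forall fun tl => ae_of_all _ fun x => hKer_mul_bound pf tl.1 tl.2 x i j
  · exact hX2.const_mul _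
  · refine ae_of_all _ fun x => ?_
    apply Continuous.continuousAt
    have c1 : Continuous fun tl : Evec d × Evec d => (⟪tl.1 - tl.2, x⟫ : ℝ) :=
      Continuous.inner (continuous_fst.sub continuous_snd) continuous_const
    have c2 : Continuous fun tl : Evec d × Evec d => (⟪tl.2, x⟫ : ℝ) :=
      Continuous.inner continuous_snd continuous_const
    have e1 := Real.continuous_exp.comp c1
    have e2 := Real.continuous_exp.comp c2
    refine (((e1.div ((continuous_const.add e1).pow 2) fun tl => ?_).mul
      ((e2.add continuous_const).div
        ((continuous_const.add e2).mul continuous_const) fun tl => ?_)).mul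
      continuous_const)
    · exact pow_ne_zero 2 (by positivity : (0:ℝ) < 1 + Real.exp ⟪tl.1 - tl.2, x⟫).ne'
    · exact mul_ne_zero (by positivity : (0:ℝ) < 1 + Real.exp ⟪tl.2, x⟫).ne'
        (by positivity : (0:ℝ) < 1 + Real.exp (flogit pf x)).ne'



variable {ν : Measure (Evec d)} [IsProbabilityMeasure ν] {pf : Evec d → ℝ}

lemma kernel_meas (hpf : Measurable pf) :
    Measurable fun x : Evec d => (ENNReal.ofReal (pf x) • Measure.dirac (x, (1:ℝ)) +
      ENNReal.ofReal (1 - pf x) • Measure.dirac (x, (0:ℝ))) := by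
  apply Measure.measurable_of_measurable_coe
  intro s hs
  simp only [Measure.coe_add, Pi.add_apply, Measure.smul_apply, smul_eq_mul,
    Measure.dirac_apply' _ hs]
  have m1 : Measurable fun x : Evec d => s.indicator (1 : Evec d × ℝ → ℝ≥0∞) (x, 1) :=
    (measurable_one.indicator hs).comp (measurable_id.prodMk measurable_const)
  have m0 : Measurable fun x : Evec d => s.indicator (1 : Evec d × ℝ → ℝ≥0∞) (x, 0) :=
    (measurable_one.indicator hs).comp (measurable_id.prodMk measurable_const)
  exact (hpf.ennreal_ofReal.mul m1).add ((measurable_const.sub hpf).ennreal_ofReal.mul m0)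

lemma jointLaw_lintegral (hpf : Measurable pf) {g : Evec d × ℝ → ℝ≥0∞} (hg : Measurable g) :
    ∫⁻ xy, g xy ∂jointLaw ν pf =
      ∫⁻ x, ENNReal.ofReal (pf x) * g (x, 1) + ENNReal.ofReal (1 - pf x) * g (x, 0) ∂ν := by
  rw [jointLaw, Measure.lintegral_bind (kernel_meas hpf).aemeasurable hg.aemeasurable]
  simp [lintegral_add_measure, lintegral_smul_measure, lintegral_dirac]

lemma jointLaw_isProb (hpf_meas : Measurable pf) (hpf : ∀ x, pf x ∈ Set.Ioo (0:ℝ) 1) :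
    IsProbabilityMeasure (jointLaw ν pf) := by
  constructor
  rw [jointLaw, Measure.bind_apply MeasurableSet.univ (kernel_meas hpf_meas).aemeasurable]
  have h1 : ∀ x : Evec d, (ENNReal.ofReal (pf x) • Measure.dirac (x,(1:ℝ)) +
      ENNReal.ofReal (1 - pf x) • Measure.dirac (x,(0:ℝ))) Set.univ = 1 := by
    intro x
    simp only [Measure.coe_add, Pi.add_apply, Measure.smul_apply, smul_eq_mul,
      Measure.dirac_apply, Set.mem_univ, Set.indicator_of_mem, Pi.one_apply, mul_one]
    rw [← ENNReal.ofReal_add (hpf x).1.le (by linarith [(hpf x).2]), show pf x + (1 - pf x) = 1 by ring,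
      ENNReal.ofReal_one]
  simp only [h1, lintegral_one, measure_univ]

lemma jointLaw_ae_y (hpf_meas : Measurable pf) :
    ∀ᵐ xy ∂jointLaw ν pf, xy.2 = 0 ∨ xy.2 = 1 := by
  rw [ae_iff]
  have hs : MeasurableSet {xy : Evec d × ℝ | ¬(xy.2 = 0 ∨ xy.2 = 1)} := by
    apply MeasurableSet.compl (MeasurableSet.union ?_ ?_)
    · exact measurable_snd (measurableSet_singleton 0)
    · exact measurable_snd (measurableSet_singleton 1)
  rw [jointLaw, Measure.bind_apply hs (kernel_meas hpf_meas).aemeasurable]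
  have h1 : ∀ x : Evec d, (ENNReal.ofReal (pf x) • Measure.dirac (x,(1:ℝ)) +
      ENNReal.ofReal (1 - pf x) • Measure.dirac (x,(0:ℝ)))
        {xy : Evec d × ℝ | ¬(xy.2 = 0 ∨ xy.2 = 1)} = 0 := by
    intro x
    simp only [Measure.coe_add, Pi.add_apply, Measure.smul_apply, smul_eq_mul,
      Measure.dirac_apply' _ hs, Set.indicator_apply, Set.mem_setOf_eq]
    norm_num
  simp only [h1, lintegral_zero]

lemma jointLaw_int_normsq (hpf_meas : Measurable pf) (hpf : ∀ x, pf x ∈ Set.Ioo (0:ℝ) 1)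
    (hX2 : Integrable (fun x : Evec d => ‖x‖ ^ 2) ν) :
    Integrable (fun xy : Evec d × ℝ => ‖xy.1‖ ^ 2) (jointLaw ν pf) := by
  refine ⟨((continuous_fst.norm.pow 2)).aestronglyMeasurable, ?_⟩
  rw [HasFiniteIntegral]
  have hg : Measurable fun xy : Evec d × ℝ => ‖‖xy.1‖ ^ 2‖ₑ :=
    (continuous_fst.norm.pow 2).measurable.enorm
  rw [jointLaw_lintegral hpf_meas hg]
  have h1 : ∀ x : Evec d, ENNReal.ofReal (pf x) * ‖‖x‖ ^ 2‖ₑ +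
      ENNReal.ofReal (1 - pf x) * ‖‖x‖ ^ 2‖ₑ = ‖‖x‖ ^ 2‖ₑ := by
    intro x
    rw [← add_mul, ← ENNReal.ofReal_add (hpf x).1.le (by linarith [(hpf x).2]),
      show pf x + (1 - pf x) = 1 by ring, ENNReal.ofReal_one, one_mul]
  simp only [h1]
  exact hX2.2


section AccProb

lemma accProb_cont : Continuous fun p : Evec d × (Evec d × ℝ) => accProb p.1 p.2 :=
  (continuous_snd.snd.sub (continuous_sigm.comp
    (Continuous.inner continuous_fst continuous_snd.fst))).abs

lemma accProb_cont_xy (lam : Evec d) : Continuous fun xy : Evec d × ℝ => accProb lam xy :=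
  accProb_cont.comp (Continuous.prodMk_right lam)

lemma accProb_nonneg (lam : Evec d) (xy : Evec d × ℝ) : 0 ≤ accProb lam xy := abs_nonneg _

lemma accProb_pos (lam : Evec d) {xy : Evec d × ℝ} (h : xy.2 = 0 ∨ xy.2 = 1) :
    0 < accProb lam xy := by
  rcases h with h | h <;> rw [accProb, h] <;>
    [skip; skip] <;> rw [abs_pos] <;>
    [exact sub_ne_zero.mpr (by linarith [sigm_pos ⟪lam, xy.1⟫]);
     exact sub_ne_zero.mpr (by linarith [sigm_lt_one ⟪lam, xy.1⟫])]

lemma accProb_le_one (lam : Evec d) {xy : Evec d × ℝ} (h : xy.2 = 0 ∨ xy.2 = 1) :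
    accProb lam xy ≤ 1 := by
  have h1 := sigm_pos ⟪lam, xy.1⟫
  have h2 := sigm_lt_one ⟪lam, xy.1⟫
  rcases h with h | h <;> rw [accProb, h, abs_le] <;> constructor <;> linarith

end AccProb

section ABar

variable (μ : Measure (Evec d × ℝ)) [IsProbabilityMeasure μ]
  (hy : ∀ᵐ xy ∂μ, xy.2 = 0 ∨ xy.2 = 1)
include hy

lemma accProb_integrable (lam : Evec d) : Integrable (accProb lam) μ := by
  apply Integrable.mono' (integrable_const 1) (accProb_cont_xy lam).aestronglyMeasurable
  filter_upwards [hy] with xy h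
  rw [Real.norm_eq_abs, abs_of_nonneg (accProb_nonneg lam xy)]
  exact accProb_le_one lam h

lemma aBar_pos (lam : Evec d) : 0 < aBar μ lam := by
  rw [aBar, integral_pos_iff_support_of_nonneg_ae
    (ae_of_all _ (accProb_nonneg lam)) (accProb_integrable μ hy lam)]
  have hs : MeasurableSet {xy : Evec d × ℝ | xy.2 = 0 ∨ xy.2 = 1} :=
    MeasurableSet.union (measurable_snd (measurableSet_singleton 0))
      (measurable_snd (measurableSet_singleton 1))
  have hsub : {xy : Evec d × ℝ | xy.2 = 0 ∨ xy.2 = 1} ⊆ Function.support (accProb lam) :=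
    fun xy h => (accProb_pos lam h).ne'
  have h1 : μ {xy : Evec d × ℝ | xy.2 = 0 ∨ xy.2 = 1} = 1 := by
    have h0 : μ {xy : Evec d × ℝ | ¬(xy.2 = 0 ∨ xy.2 = 1)} = 0 := by
      rw [← ae_iff]; exact hy
    have := measure_add_measure_compl (μ := μ) hs
    rw [measure_univ] at this
    rw [show {xy : Evec d × ℝ | xy.2 = 0 ∨ xy.2 = 1}ᶜ
      = {xy : Evec d × ℝ | ¬(xy.2 = 0 ∨ xy.2 = 1)} from rfl, h0, add_zero] at this
    exact this
  calc (0:ℝ≥0∞) < 1 := by norm_num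
    _ = μ {xy : Evec d × ℝ | xy.2 = 0 ∨ xy.2 = 1} := h1.symm
    _ ≤ μ (Function.support (accProb lam)) := measure_mono hsub

lemma aBar_continuous : Continuous fun lam : Evec d => aBar μ lam := by
  rw [continuous_iff_continuousAt]
  intro lam0
  apply continuousAt_of_dominated (bound := fun _ => (1:ℝ))
  · exact .of_forall fun lam => (accProb_cont_xy lam).aestronglyMeasurable
  · refine .of_forall fun lam => ?_
    filter_upwards [hy] with xy h
    rw [Real.norm_eq_abs, abs_of_nonneg (accProb_nonneg lam xy)]
    exact accProb_le_one lam h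
  · exact integrable_const 1
  · exact ae_of_all _ fun xy =>
      (accProb_cont.comp (Continuous.prodMk continuous_id continuous_const)).continuousAt

end ABar

section Tilted

variable {μ : Measure (Evec d × ℝ)}

lemma dens_meas (μ : Measure (Evec d × ℝ)) (lam : Evec d) :
    Measurable fun xy : Evec d × ℝ => accProb lam xy / aBar μ lam :=
  ((accProb_cont_xy lam).measurable).div measurable_const

lemma tilted_integral {E : Type*} [NormedAddCommGroup E] [NormedSpace ℝ E]
    (lam : Evec d) (hBar : 0 < aBar μ lam) (g : Evec d × ℝ → E) :
    ∫ xy, g xy ∂tiltedLaw μ lam =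
      ∫ xy, (accProb lam xy / aBar μ lam) • g xy ∂μ := by
  rw [tiltedLaw]
  rw [show (fun xy : Evec d × ℝ => ENNReal.ofReal (accProb lam xy / aBar μ lam))
    = fun xy : Evec d × ℝ =>
      ((Real.toNNReal (accProb lam xy / aBar μ lam) : ℝ≥0) : ℝ≥0∞) from rfl]
  rw [integral_withDensity_eq_integral_smul
    ((dens_meas μ lam).real_toNNReal) g]
  congr 1; funext xy
  rw [NNReal.smul_def, Real.coe_toNNReal _ (div_nonneg (accProb_nonneg lam xy) hBar.le)]

lemma tilted_integrable_iff (lam : Evec d) (hBar : 0 < aBar μ lam) (g : Evec d × ℝ → ℝ) :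
    Integrable g (tiltedLaw μ lam) ↔
      Integrable (fun xy => g xy * (accProb lam xy / aBar μ lam)) μ := by
  rw [tiltedLaw, integrable_withDensity_iff ((dens_meas μ lam).ennreal_ofReal)
    (ae_of_all _ fun xy => ENNReal.ofReal_lt_top)]
  apply integrable_congr
  refine ae_of_all _ fun xy => ?_
  simp only [ENNReal.toReal_ofReal (div_nonneg (accProb_nonneg lam xy) hBar.le)]

end Tilted


section Score

lemma score_cont : Continuous fun p : (Evec d × Evec d) × (Evec d × ℝ) =>
    scoreVec p.1.1 p.1.2 p.2 :=
  (continuous_snd.snd.sub (continuous_sigm.comp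
    (Continuous.inner (continuous_fst.fst.sub continuous_fst.snd) continuous_snd.fst))).smul
    continuous_snd.fst

lemma score_cont_xy (θ lam : Evec d) : Continuous fun xy : Evec d × ℝ => scoreVec θ lam xy :=
  score_cont.comp (Continuous.prodMk_right (θ, lam))

lemma score_abs_scalar (θ lam : Evec d) (xy : Evec d × ℝ) :
    |xy.2 - sigm ⟪θ - lam, xy.1⟫| = accProb (θ - lam) xy := rfl

lemma score_norm_le (θ lam : Evec d) {xy : Evec d × ℝ} (h : xy.2 = 0 ∨ xy.2 = 1) :
    ‖scoreVec θ lam xy‖ ≤ ‖xy.1‖ := by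
  rw [scoreVec, norm_smul, Real.norm_eq_abs, score_abs_scalar]
  calc accProb (θ - lam) xy * ‖xy.1‖ ≤ 1 * ‖xy.1‖ :=
        mul_le_mul_of_nonneg_right (accProb_le_one _ h) (norm_nonneg _)
    _ = ‖xy.1‖ := one_mul _

lemma score_coord_le (θ lam : Evec d) {xy : Evec d × ℝ} (h : xy.2 = 0 ∨ xy.2 = 1)
    (i : Fin d) : |scoreVec θ lam xy i| ≤ ‖xy.1‖ :=
  (coord_abs_le _ i).trans (score_norm_le θ lam h)

end Score

section Mean

variable {μ : Measure (Evec d × ℝ)} [IsProbabilityMeasure μ]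

lemma int_norm_of_int_sq (hμ2 : Integrable (fun xy : Evec d × ℝ => ‖xy.1‖ ^ 2) μ) :
    Integrable (fun xy : Evec d × ℝ => ‖xy.1‖) μ := by
  apply Integrable.mono' (hμ2.add (integrable_const 1)) continuous_fst.norm.aestronglyMeasurable
  refine ae_of_all _ fun xy => ?_
  rw [Real.norm_eq_abs, abs_of_nonneg (norm_nonneg _)]
  show ‖xy.1‖ ≤ ‖xy.1‖ ^ 2 + 1
  nlinarith [sq_nonneg (‖xy.1‖ - 1), norm_nonneg xy.1]

lemma mean_cont (hy : ∀ᵐ xy ∂μ, xy.2 = 0 ∨ xy.2 = 1)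
    (hμ2 : Integrable (fun xy : Evec d × ℝ => ‖xy.1‖ ^ 2) μ) :
    Continuous fun tl : Evec d × Evec d =>
      ∫ xy, scoreVec tl.1 tl.2 xy ∂tiltedLaw μ tl.2 := by
  have hμ1 := int_norm_of_int_sq hμ2
  have hBar : ∀ lam, 0 < aBar μ lam := aBar_pos μ hy
  have htr : ∀ tl : Evec d × Evec d, ∫ xy, scoreVec tl.1 tl.2 xy ∂tiltedLaw μ tl.2 =
      ∫ xy, (accProb tl.2 xy / aBar μ tl.2) • scoreVec tl.1 tl.2 xy ∂μ :=
    fun tl => tilted_integral tl.2 (hBar tl.2) _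
  simp only [htr]
  rw [continuous_iff_continuousAt]; intro tl0
  set c := aBar μ tl0.2 / 2 with hc
  have hcpos : 0 < c := half_pos (hBar tl0.2)
  have hev : ∀ᶠ tl : Evec d × Evec d in 𝓝 tl0, c < aBar μ tl.2 :=
    Filter.Tendsto.eventually_const_lt (half_lt_self (hBar tl0.2))
      ((aBar_continuous μ hy).comp continuous_snd).continuousAt
  apply continuousAt_of_dominated (bound := fun xy : Evec d × ℝ => (1/c) * ‖xy.1‖)
  · exact .of_forall fun tl => ((dens_meas μ tl.2).aestronglyMeasurable).smul
      (score_cont_xy tl.1 tl.2).aestronglyMeasurable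
  · filter_upwards [hev] with tl htl
    filter_upwards [hy] with xy hxy
    rw [norm_smul, Real.norm_eq_abs,
      abs_of_nonneg (div_nonneg (accProb_nonneg _ xy) (hBar tl.2).le)]
    have h1 : accProb tl.2 xy / aBar μ tl.2 ≤ 1 / c :=
      div_le_div₀ zero_le_one (accProb_le_one _ hxy) hcpos htl.le
    exact mul_le_mul h1 (score_norm_le _ _ hxy)
      (norm_nonneg _) (by positivity)
  · exact hμ1.const_mul _
  · refine ae_of_all _ fun xy => ?_
    have cden : Continuous fun tl : Evec d × Evec d => accProb tl.2 xy / aBar μ tl.2 :=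
      (accProb_cont.comp (continuous_snd.prodMk continuous_const)).div
        ((aBar_continuous μ hy).comp continuous_snd) fun tl => (hBar tl.2).ne'
    have csc : Continuous fun tl : Evec d × Evec d => scoreVec tl.1 tl.2 xy :=
      score_cont.comp (continuous_id.prodMk continuous_const)
    exact (cden.smul csc).continuousAt

end Mean


section Jpart

variable {μ : Measure (Evec d × ℝ)} [IsProbabilityMeasure μ]

lemma score_coord_cont (θ lam : Evec d) (i : Fin d) :
    Continuous fun xy : Evec d × ℝ => scoreVec θ lam xy i :=
  (continuous_apply i).comp ((PiLp.continuous_ofLp 2 _).comp (score_cont_xy θ lam))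

lemma J_bound_integrable (hμ2 : Integrable (fun xy : Evec d × ℝ => ‖xy.1‖ ^ 2) μ)
    (c M : ℝ) : Integrable (fun xy : Evec d × ℝ =>
      (1/c) * (‖xy.1‖^2 + (2*M*‖xy.1‖ + M^2))) μ :=
  (hμ2.add (((int_norm_of_int_sq hμ2).const_mul (2*M)).add (integrable_const _))).const_mul _

lemma J_pointwise_bound {θ lam : Evec d} {xy : Evec d × ℝ} (hxy : xy.2 = 0 ∨ xy.2 = 1)
    {mv : Evec d} {M c : ℝ} (hMv : ‖mv‖ ≤ M) (hc : 0 < c) (hcB : c ≤ aBar μ lam)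
    (i j : Fin d) :
    ‖(accProb lam xy / aBar μ lam) • ((scoreVec θ lam xy i - mv i) *
        (scoreVec θ lam xy j - mv j))‖ ≤ (1/c) * (‖xy.1‖^2 + (2*M*‖xy.1‖ + M^2)) := by
  have hBar : (0:ℝ) < aBar μ lam := lt_of_lt_of_le hc hcB
  have hM0 : 0 ≤ M := (norm_nonneg mv).trans hMv
  have hd0 : 0 ≤ accProb lam xy / aBar μ lam :=
    div_nonneg (accProb_nonneg _ _) hBar.le
  have hdle : accProb lam xy / aBar μ lam ≤ 1 / c :=
    div_le_div₀ zero_le_one (accProb_le_one _ hxy) hc hcB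
  have hb : ∀ k : Fin d, |scoreVec θ lam xy k - mv k| ≤ ‖xy.1‖ + M := fun k =>
    (abs_sub _ _).trans (add_le_add (score_coord_le θ lam hxy k)
      ((coord_abs_le mv k).trans hMv))
  rw [smul_eq_mul, Real.norm_eq_abs, abs_mul, abs_mul,
    abs_of_nonneg hd0]
  calc accProb lam xy / aBar μ lam * (|scoreVec θ lam xy i - mv i| * |scoreVec θ lam xy j - mv j|)
      ≤ (1/c) * ((‖xy.1‖ + M) * (‖xy.1‖ + M)) := by
        apply mul_le_mul hdle (mul_le_mul (hb i) (hb j) (abs_nonneg _)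
          (by positivity)) (mul_nonneg (abs_nonneg _) (abs_nonneg _)) (by positivity)
    _ = (1/c) * (‖xy.1‖^2 + (2*M*‖xy.1‖ + M^2)) := by ring

lemma J_integrable (hy : ∀ᵐ xy ∂μ, xy.2 = 0 ∨ xy.2 = 1)
    (hμ2 : Integrable (fun xy : Evec d × ℝ => ‖xy.1‖ ^ 2) μ) (θ lam : Evec d) (i j : Fin d) :
    Integrable (fun xy : Evec d × ℝ =>
      (scoreVec θ lam xy i - (∫ xy', scoreVec θ lam xy' ∂(tiltedLaw μ lam)) i) *
        (scoreVec θ lam xy j - (∫ xy', scoreVec θ lam xy' ∂(tiltedLaw μ lam)) j))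
      (tiltedLaw μ lam) := by
  have hBar := aBar_pos μ hy lam
  set mv : Evec d := ∫ xy', scoreVec θ lam xy' ∂tiltedLaw μ lam with hmv
  rw [tilted_integrable_iff lam hBar]
  apply Integrable.mono' (J_bound_integrable hμ2 (aBar μ lam) ‖mv‖)
  · exact ((((score_coord_cont θ lam i).sub continuous_const).mul
      ((score_coord_cont θ lam j).sub continuous_const)).measurable.mul
      (dens_meas μ lam)).aestronglyMeasurable
  · filter_upwards [hy] with xy hxy
    have := J_pointwise_bound (μ := μ) (θ := θ) (lam := lam) hxy (le_refl ‖mv‖)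
      hBar le_rfl i j
    rw [smul_eq_mul] at this
    calc ‖(scoreVec θ lam xy i - mv i) * (scoreVec θ lam xy j - mv j) *
          (accProb lam xy / aBar μ lam)‖
        = ‖accProb lam xy / aBar μ lam * ((scoreVec θ lam xy i - mv i) *
            (scoreVec θ lam xy j - mv j))‖ := by rw [mul_comm]
      _ ≤ _ := this

lemma J_continuous (hy : ∀ᵐ xy ∂μ, xy.2 = 0 ∨ xy.2 = 1)
    (hμ2 : Integrable (fun xy : Evec d × ℝ => ‖xy.1‖ ^ 2) μ) :
    Continuous fun tl : Evec d × Evec d => Jmat μ tl.1 tl.2 := by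
  have hBar := aBar_pos μ hy
  have hmc := mean_cont hy hμ2
  apply continuous_matrix; intro i j
  have hrw : ∀ tl : Evec d × Evec d, Jmat μ tl.1 tl.2 i j =
      ∫ xy, (accProb tl.2 xy / aBar μ tl.2) •
        ((scoreVec tl.1 tl.2 xy i -
            (∫ xy', scoreVec tl.1 tl.2 xy' ∂tiltedLaw μ tl.2) i) *
          (scoreVec tl.1 tl.2 xy j -
            (∫ xy', scoreVec tl.1 tl.2 xy' ∂tiltedLaw μ tl.2) j)) ∂μ :=
    fun tl => tilted_integral tl.2 (hBar tl.2) _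
  simp only [hrw]
  rw [continuous_iff_continuousAt]; intro tl0
  set mfun : Evec d × Evec d → Evec d :=
    fun tl => ∫ xy', scoreVec tl.1 tl.2 xy' ∂tiltedLaw μ tl.2 with hmdef
  set c : ℝ := aBar μ tl0.2 / 2 with hc
  have hcpos : 0 < c := half_pos (hBar tl0.2)
  have hev : ∀ᶠ tl : Evec d × Evec d in 𝓝 tl0, c < aBar μ tl.2 :=
    Filter.Tendsto.eventually_const_lt (half_lt_self (hBar tl0.2))
      ((aBar_continuous μ hy).comp continuous_snd).continuousAt
  set M : ℝ := ‖mfun tl0‖ + 1 with hMdef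
  have hM : ∀ᶠ tl : Evec d × Evec d in 𝓝 tl0, ‖mfun tl‖ < M :=
    Filter.Tendsto.eventually_lt_const (lt_add_one _) hmc.norm.continuousAt
  apply continuousAt_of_dominated
    (bound := fun xy : Evec d × ℝ => (1/c) * (‖xy.1‖^2 + (2*M*‖xy.1‖ + M^2)))
  · exact .of_forall fun tl => ((dens_meas μ tl.2).mul
      ((((score_coord_cont tl.1 tl.2 i).sub continuous_const).mul
        ((score_coord_cont tl.1 tl.2 j).sub continuous_const)).measurable)).aestronglyMeasurable
  · filter_upwards [hev, hM] with tl h1 h2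
    filter_upwards [hy] with xy hxy
    exact J_pointwise_bound hxy h2.le hcpos h1.le i j
  · exact J_bound_integrable hμ2 c M
  · refine ae_of_all _ fun xy => ?_
    have cden : Continuous fun tl : Evec d × Evec d => accProb tl.2 xy / aBar μ tl.2 :=
      (accProb_cont.comp (continuous_snd.prodMk continuous_const)).div
        ((aBar_continuous μ hy).comp continuous_snd) fun tl => (hBar tl.2).ne'
    have csc : ∀ k : Fin d, Continuous fun tl : Evec d × Evec d => scoreVec tl.1 tl.2 xy k :=
      fun k => (continuous_apply k).comp ((PiLp.continuous_ofLp 2 _).comp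
        (score_cont.comp (continuous_id.prodMk continuous_const)))
    have cm : ∀ k : Fin d, Continuous fun tl : Evec d × Evec d => mfun tl k :=
      fun k => (continuous_apply k).comp ((PiLp.continuous_ofLp 2 _).comp hmc)
    exact (cden.smul (((csc i).sub (cm i)).mul ((csc j).sub (cm j)))).continuousAt

end Jpart


end Helpers

/-- If `E‖X‖² < ∞` and no nonzero `v` has `E|v'X| = 0`, then the matrix
`H(θ, λ)` is finite (entrywise integrable), symmetric positive definite and jointly continuous
in `(θ, λ)`, and the score covariance `J(θ, λ) = Var_{P_λ}[(Y - σ((θ-λ)'X)) X]` is finite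
(entrywise integrable) and jointly continuous in `(θ, λ)`. -/
theorem Hmat_Jmat_finite_posDef_continuous {d : ℕ}
    (ν : Measure (Evec d)) [IsProbabilityMeasure ν]
    (pf : Evec d → ℝ) (hpf_meas : Measurable pf) (hpf : ∀ x, pf x ∈ Set.Ioo (0 : ℝ) 1)
    (hX2 : Integrable (fun x : Evec d => ‖x‖ ^ 2) ν)
    (hnd : ∀ v : Evec d, v ≠ 0 → ∫ x, |⟪v, x⟫| ∂ν ≠ 0) :
    (∀ θ lam : Evec d, ∀ i j : Fin d,
        Integrable (fun x : Evec d =>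
          Real.exp ⟪θ - lam, x⟫ / (1 + Real.exp ⟪θ - lam, x⟫) ^ 2 *
            ((Real.exp ⟪lam, x⟫ + Real.exp (flogit pf x)) /
              ((1 + Real.exp ⟪lam, x⟫) * (1 + Real.exp (flogit pf x)))) * (x i * x j)) ν) ∧
    (∀ θ lam : Evec d, (Hmat ν pf θ lam).PosDef) ∧
    Continuous (fun tl : Evec d × Evec d => Hmat ν pf tl.1 tl.2) ∧
    (∀ θ lam : Evec d, ∀ i j : Fin d,
        Integrable (fun xy : Evec d × ℝ =>
          (scoreVec θ lam xy i -
              (∫ xy', scoreVec θ lam xy' ∂(tiltedLaw (jointLaw ν pf) lam)) i) *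
            (scoreVec θ lam xy j -
              (∫ xy', scoreVec θ lam xy' ∂(tiltedLaw (jointLaw ν pf) lam)) j))
          (tiltedLaw (jointLaw ν pf) lam)) ∧
    Continuous (fun tl : Evec d × Evec d => Jmat (jointLaw ν pf) tl.1 tl.2) := by
  haveI : IsProbabilityMeasure (jointLaw ν pf) := jointLaw_isProb hpf_meas hpf
  have hy : ∀ᵐ xy ∂jointLaw ν pf, xy.2 = 0 ∨ xy.2 = 1 := jointLaw_ae_y hpf_meas
  have hμ2 : Integrable (fun xy : Evec d × ℝ => ‖xy.1‖ ^ 2) (jointLaw ν pf) :=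
    jointLaw_int_normsq hpf_meas hpf hX2
  refine ⟨fun θ lam i j => hKer_integrable ν pf hpf_meas hX2 θ lam i j,
    fun θ lam => Hmat_posDef ν pf hpf_meas hX2 hnd θ lam,
    Hmat_continuous ν pf hpf_meas hX2,
    fun θ lam i j => J_integrable hy hμ2 θ lam i j,
    J_continuous hy hμ2⟩
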